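/- Let Φ be a continuously differentiable Δ₂(0)-regular N-function, G a finitely generated group with finite generating set S acting on a countable set X, and ρ(f) = ∑_{s∈S} ∑_{x∈X} Φ(f(s⁻¹x) − f(x)) on D^Φ(X). Then for all f, g ∈ D^Φ(X), the one-sided Gâteaux derivative lim_{t→0⁺} (ρ(f + tg) − ρ(f))/t exists and equals ⟨Δ_Φ f, g⟩ = ∑_{x∈X} ∑_{s∈S} Φ'(f(s⁻¹x) − f(x))(g(s⁻¹x) − g(x)). -/

import Mathlib

open MeasureTheory Filter Topology

/-- `Φ` is an N-function with right derivative `φ`. -/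
structure IsNFunction (Φ φ : ℝ → ℝ) : Prop where
  repr : ∀ x : ℝ, Φ x = ∫ t in (0:ℝ)..|x|, φ t
  mono : MonotoneOn φ (Set.Ici (0:ℝ))
  rightCont : ∀ t : ℝ, 0 ≤ t → ContinuousWithinAt φ (Set.Ici t) t
  zero : φ 0 = 0
  pos : ∀ t : ℝ, 0 < t → 0 < φ t
  tendsto_top : Tendsto φ atTop atTop

variable {G X : Type*}

/-- Membership in the Orlicz space `ℓ^Φ(X)`. -/
def MemOrlicz (Φ : ℝ → ℝ) (f : X → ℝ) : Prop :=
  ∃ a > (0:ℝ), Summable fun x => Φ (a * f x)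

/-- The permutation representation: `(λ_X(g) f)(x) = f(g⁻¹ • x)`. -/
def lamX [Group G] [MulAction G X] (g : G) (f : X → ℝ) : X → ℝ :=
  fun x => f (g⁻¹ • x)

/-- The space of Φ-Dirichlet finite functions `D^Φ(X)`. -/
def MemDPhi [Group G] [MulAction G X] (Φ : ℝ → ℝ) (f : X → ℝ) : Prop :=
  ∀ g : G, MemOrlicz Φ (lamX g f - f)

/-- Functions constant on the `G`-orbits of `X`. -/
def ConstOnOrbits [Group G] [MulAction G X] (f : X → ℝ) : Prop :=
  ∀ (g : G) (x : X), f (g • x) = f x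

/-- The real-valued modular `ρ(f) = ∑_{s∈S} ∑_{x∈X} Φ(f(s⁻¹x) − f(x))`. -/
noncomputable def dirichletModular' [Group G] [MulAction G X]
    (S : Finset G) (Φ : ℝ → ℝ) (f : X → ℝ) : ℝ :=
  ∑' x : X, ∑ s ∈ S, Φ (f (s⁻¹ • x) - f x)

namespace NFAux

noncomputable def phi (φ₀ : ℝ → ℝ) : ℝ → ℝ := fun t => φ₀ (max t 0)

variable {Φ φ₀ : ℝ → ℝ}

lemma phi_mono (hΦ : IsNFunction Φ φ₀) : Monotone (phi φ₀) := fun a b hab =>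
  hΦ.mono (Set.mem_Ici.2 (le_max_right a 0)) (Set.mem_Ici.2 (le_max_right b 0))
    (max_le_max hab le_rfl)

lemma phi_nonneg (hΦ : IsNFunction Φ φ₀) (t : ℝ) : 0 ≤ phi φ₀ t := by
  have := hΦ.mono (Set.mem_Ici.2 le_rfl) (Set.mem_Ici.2 (le_max_right t 0)) (le_max_right t 0)
  simpa [phi, hΦ.zero] using this

lemma phi_eq {t : ℝ} (ht : 0 ≤ t) : phi φ₀ t = φ₀ t := by simp [phi, max_eq_left ht]

lemma repr' (hΦ : IsNFunction Φ φ₀) (x : ℝ) : Φ x = ∫ t in (0:ℝ)..|x|, phi φ₀ t := by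
  rw [hΦ.repr]
  apply intervalIntegral.integral_congr
  intro t ht
  rw [Set.uIcc_of_le (abs_nonneg x)] at ht
  exact (phi_eq ht.1).symm

lemma phi_intervalIntegrable (hΦ : IsNFunction Φ φ₀) (a b : ℝ) : IntervalIntegrable (phi φ₀) volume a b :=
  ((phi_mono hΦ).monotoneOn _).intervalIntegrable

lemma Phi_abs (hΦ : IsNFunction Φ φ₀) (x : ℝ) : Φ x = Φ |x| := by
  rw [hΦ.repr x, hΦ.repr |x|, abs_abs]

lemma Phi_nonneg (hΦ : IsNFunction Φ φ₀) (x : ℝ) : 0 ≤ Φ x := by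
  rw [repr' hΦ]
  exact intervalIntegral.integral_nonneg (abs_nonneg x) (fun t _ => phi_nonneg hΦ t)

lemma Phi_zero (hΦ : IsNFunction Φ φ₀) : Φ 0 = 0 := by
  simp [hΦ.repr 0]

lemma Phi_mono_abs (hΦ : IsNFunction Φ φ₀) {a b : ℝ} (h : |a| ≤ |b|) : Φ a ≤ Φ b := by
  rw [repr' hΦ a, repr' hΦ b,
    ← intervalIntegral.integral_add_adjacent_intervals (b := |a|)
      (phi_intervalIntegrable hΦ 0 |a|) (phi_intervalIntegrable hΦ |a| |b|)]
  have : 0 ≤ ∫ t in |a|..|b|, phi φ₀ t :=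
    intervalIntegral.integral_nonneg h (fun t _ => phi_nonneg hΦ t)
  linarith

lemma mul_phi_le (hΦ : IsNFunction Φ φ₀) {w : ℝ} (hw : 0 ≤ w) : w * phi φ₀ w ≤ Φ (2 * w) := by
  have h2w : |2 * w| = 2 * w := abs_of_nonneg (by linarith)
  rw [repr' hΦ, h2w,
    ← intervalIntegral.integral_add_adjacent_intervals (b := w)
      (phi_intervalIntegrable hΦ 0 w) (phi_intervalIntegrable hΦ w (2*w))]
  have h1 : 0 ≤ ∫ t in (0:ℝ)..w, phi φ₀ t :=
    intervalIntegral.integral_nonneg hw (fun t _ => phi_nonneg hΦ t)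
  have h2 : ∫ t in w..(2*w), (fun _ => phi φ₀ w) t ≤ ∫ t in w..(2*w), phi φ₀ t := by
    apply intervalIntegral.integral_mono_on (by linarith)
      (intervalIntegrable_const) (phi_intervalIntegrable hΦ w (2*w))
    intro t ht
    exact phi_mono hΦ ht.1
  rw [intervalIntegral.integral_const] at h2
  simp only [smul_eq_mul] at h2
  nlinarith

lemma Phi_pos (hΦ : IsNFunction Φ φ₀) {c : ℝ} (hc : 0 < c) : 0 < Φ c := by
  have h : (c/2) * phi φ₀ (c/2) ≤ Φ (2 * (c/2)) := mul_phi_le hΦ (by linarith)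
  rw [show 2 * (c/2) = c by ring] at h
  have hp : 0 < phi φ₀ (c/2) := by
    rw [phi_eq (by linarith)]
    exact hΦ.pos _ (by linarith)
  nlinarith

lemma deriv_Phi_eq (hΦ : IsNFunction Φ φ₀) (hC1 : ContDiff ℝ 1 Φ) {w : ℝ} (hw : 0 ≤ w) :
    deriv Φ w = phi φ₀ w := by
  have hd : Differentiable ℝ Φ := hC1.differentiable one_ne_zero
  have hmeas : StronglyMeasurableAtFilter (phi φ₀) (𝓝[Set.Ioi w] w) :=
    ((phi_mono hΦ).measurable).stronglyMeasurable.stronglyMeasurableAtFilter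
  have hcont : ContinuousWithinAt (phi φ₀) (Set.Ici w) w := by
    have h1 : ContinuousWithinAt φ₀ (Set.Ici w) (max w 0) := by
      rw [max_eq_left hw]; exact hΦ.rightCont w hw
    have h2 : ContinuousWithinAt (fun t : ℝ => max t 0) (Set.Ici w) w :=
      (continuous_id.max continuous_const).continuousWithinAt
    have h3 : Set.MapsTo (fun t : ℝ => max t 0) (Set.Ici w) (Set.Ici w) := by
      intro t ht
      exact Set.mem_Ici.2 (le_trans ht (le_max_left t 0))
    have : ContinuousWithinAt (φ₀ ∘ fun t : ℝ => max t 0) (Set.Ici w) w :=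
      ContinuousWithinAt.comp h1 h2 h3
    exact this
  have hF : HasDerivWithinAt (fun u => ∫ t in (0:ℝ)..u, phi φ₀ t) (phi φ₀ w) (Set.Ici w) w :=
    intervalIntegral.integral_hasDerivWithinAt_right (phi_intervalIntegrable hΦ 0 w) hmeas
      (hcont.mono Set.Ioi_subset_Ici_self)
  have hΦF : HasDerivWithinAt Φ (phi φ₀ w) (Set.Ici w) w := by
    apply hF.congr
    · intro y hy
      rw [repr' hΦ y, abs_of_nonneg (le_trans hw hy)]
    · rw [repr' hΦ w, abs_of_nonneg hw]
  have h1 := hΦF.derivWithin (uniqueDiffOn_Ici w w Set.self_mem_Ici)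
  have h2 := ((hd w).hasDerivAt.hasDerivWithinAt (s := Set.Ici w)).derivWithin
    (uniqueDiffOn_Ici w w Set.self_mem_Ici)
  rw [← h1, ← h2]

lemma abs_deriv_Phi (hΦ : IsNFunction Φ φ₀) (hC1 : ContDiff ℝ 1 Φ) (y : ℝ) :
    |deriv Φ y| = phi φ₀ |y| := by
  rcases le_or_gt 0 y with hy | hy
  · rw [abs_of_nonneg hy, deriv_Phi_eq hΦ hC1 hy]
    exact abs_of_nonneg (phi_nonneg hΦ y)
  · have heven : Φ = fun x => Φ (-x) := by
      funext x
      rw [Phi_abs hΦ x, Phi_abs hΦ (-x), abs_neg]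
    have : deriv Φ y = -deriv Φ (-y) := by
      conv_lhs => rw [heven]
      exact deriv_comp_neg (f := Φ) (x := y)
    rw [this, abs_neg, abs_of_nonpos (le_of_lt hy), deriv_Phi_eq hΦ hC1 (by linarith)]
    exact abs_of_nonneg (phi_nonneg hΦ (-y))

lemma abs_deriv_Phi_le (hΦ : IsNFunction Φ φ₀) (hC1 : ContDiff ℝ 1 Φ) {y w : ℝ}
    (h : |y| ≤ w) : |deriv Φ y| ≤ phi φ₀ w := by
  rw [abs_deriv_Phi hΦ hC1]
  exact phi_mono hΦ h

lemma young (hΦ : IsNFunction Φ φ₀) {w v : ℝ} (hw : 0 ≤ w) (hv : 0 ≤ v) :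
    phi φ₀ w * v ≤ Φ (2 * w) + Φ (2 * v) := by
  rcases le_total v w with h | h
  · have h1 : phi φ₀ w * v ≤ w * phi φ₀ w := by nlinarith [phi_nonneg hΦ w]
    have h2 := mul_phi_le hΦ hw
    have h3 := Phi_nonneg hΦ (2 * v)
    linarith
  · have h1 : phi φ₀ w ≤ phi φ₀ v := phi_mono hΦ h
    have h2 : phi φ₀ w * v ≤ v * phi φ₀ v := by nlinarith [phi_nonneg hΦ w]
    have h3 := mul_phi_le hΦ hv
    have h4 := Phi_nonneg hΦ (2 * w)
    linarith

lemma Phi_add_le (hΦ : IsNFunction Φ φ₀) (a b : ℝ) : Φ (a + b) ≤ Φ (2 * a) + Φ (2 * b) := by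
  rcases le_total |a| |b| with h | h
  · have : Φ (a + b) ≤ Φ (2 * b) := by
      apply Phi_mono_abs hΦ
      calc |a + b| ≤ |a| + |b| := abs_add_le a b
        _ ≤ 2 * |b| := by linarith
        _ = |2 * b| := by rw [abs_mul]; simp
    linarith [Phi_nonneg hΦ (2 * a)]
  · have : Φ (a + b) ≤ Φ (2 * a) := by
      apply Phi_mono_abs hΦ
      calc |a + b| ≤ |a| + |b| := abs_add_le a b
        _ ≤ 2 * |a| := by linarith
        _ = |2 * a| := by rw [abs_mul]; simp
    linarith [Phi_nonneg hΦ (2 * b)]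

lemma summable_double (hΦ : IsNFunction Φ φ₀)
    (hΔ₂ : ∃ x₀ > (0:ℝ), ∃ K > (2:ℝ), ∀ x : ℝ, 0 ≤ x → x ≤ x₀ → Φ (2 * x) ≤ K * Φ x)
    {X : Type*} {u : X → ℝ} (hs : Summable fun x => Φ (u x)) :
    Summable fun x => Φ (2 * u x) := by
  obtain ⟨x₀, hx₀, K, hK, hD⟩ := hΔ₂
  have hPx₀ : 0 < Φ x₀ := Phi_pos hΦ hx₀
  have hfin : {x | ¬ Φ (u x) < Φ x₀}.Finite := by
    rw [← Filter.eventually_cofinite]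
    exact hs.tendsto_cofinite_zero.eventually_lt_const hPx₀
  have key : ∀ x, x ∉ hfin.toFinset → Φ (2 * u x) ≤ K * Φ (u x) := by
    intro x hx
    rw [Set.Finite.mem_toFinset, Set.mem_setOf_eq, not_not] at hx
    have habs : |u x| ≤ x₀ := by
      by_contra hlt
      push_neg at hlt
      have : Φ x₀ ≤ Φ (u x) := by
        apply Phi_mono_abs hΦ
        rw [abs_of_nonneg (le_of_lt hx₀)]
        exact le_of_lt hlt
      linarith
    calc Φ (2 * u x) = Φ (2 * |u x|) := by
          rw [Phi_abs hΦ (2 * u x), abs_mul, abs_two]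
      _ ≤ K * Φ (|u x|) := hD _ (abs_nonneg _) habs
      _ = K * Φ (u x) := by rw [← Phi_abs hΦ]
  apply Summable.of_nonneg_of_le (fun x => Phi_nonneg hΦ _)
    (f := fun x => K * Φ (u x) + Set.indicator {x | ¬ Φ (u x) < Φ x₀} (fun x => Φ (2 * u x)) x)
  · intro x
    by_cases hx : x ∈ hfin.toFinset
    · rw [Set.indicator_of_mem (Set.Finite.mem_toFinset hfin |>.mp hx)]
      have : 0 ≤ K * Φ (u x) := by
        have := Phi_nonneg hΦ (u x); nlinarith
      linarith
    · rw [Set.indicator_of_notMem (fun hm => hx ((Set.Finite.mem_toFinset hfin).mpr hm))]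
      simpa using key x hx
  · apply Summable.add (hs.mul_left K)
    apply summable_of_ne_finset_zero (s := hfin.toFinset)
    intro x hx
    exact Set.indicator_of_notMem (fun hm => hx ((Set.Finite.mem_toFinset hfin).mpr hm)) _

lemma summable_scale (hΦ : IsNFunction Φ φ₀)
    (hΔ₂ : ∃ x₀ > (0:ℝ), ∃ K > (2:ℝ), ∀ x : ℝ, 0 ≤ x → x ≤ x₀ → Φ (2 * x) ≤ K * Φ x)
    {X : Type*} {u : X → ℝ} {a : ℝ} (ha : 0 < a) (hs : Summable fun x => Φ (a * u x))
    (c : ℝ) : Summable fun x => Φ (c * u x) := by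
  have step : ∀ n : ℕ, Summable fun x => Φ (2 ^ n * (a * u x)) := by
    intro n
    induction n with
    | zero => simpa using hs
    | succ n ih =>
        have h2 := summable_double hΦ hΔ₂ (u := fun x => 2 ^ n * (a * u x)) ih
        exact h2.congr (fun x => congrArg Φ (by ring))
  obtain ⟨n, hn⟩ : ∃ n : ℕ, |c| / a < 2 ^ n := pow_unbounded_of_one_lt _ one_lt_two
  have hle : |c| ≤ 2 ^ n * a := by
    rw [div_lt_iff₀ ha] at hn
    linarith
  apply Summable.of_nonneg_of_le (fun x => Phi_nonneg hΦ _) (f := fun x => Φ (2 ^ n * (a * u x)))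
    (fun x => ?_) (step n)
  apply Phi_mono_abs hΦ
  rw [abs_mul, abs_mul, abs_mul]
  have h1 : |(2:ℝ) ^ n| = 2 ^ n := abs_of_nonneg (by positivity)
  have h2 : |a| = a := abs_of_nonneg (le_of_lt ha)
  rw [h1, h2, ← mul_assoc]
  exact mul_le_mul_of_nonneg_right hle (abs_nonneg _)

lemma quotient_bound (hΦ : IsNFunction Φ φ₀) (hC1 : ContDiff ℝ 1 Φ) {u v t : ℝ}
    (ht : 0 < t) (ht1 : t ≤ 1) :
    |(Φ (u + t * v) - Φ u) / t| ≤ phi φ₀ (|u| + |v|) * |v| := by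
  have hd : Differentiable ℝ Φ := hC1.differentiable one_ne_zero
  have hψ : ∀ r : ℝ, HasDerivAt (fun r => Φ (u + r * v)) (deriv Φ (u + r * v) * v) r := by
    intro r
    have h1 : HasDerivAt (fun r : ℝ => u + r * v) v r := by
      simpa using ((hasDerivAt_id r).mul_const v).const_add u
    exact ((hd _).hasDerivAt.comp r h1)
  obtain ⟨c, hc, hceq⟩ := exists_hasDerivAt_eq_slope (fun r => Φ (u + r * v))
    (fun r => deriv Φ (u + r * v) * v) ht
    (Continuous.continuousOn (by fun_prop)) (fun r _ => hψ r)
  have h0 : Φ (u + 0 * v) = Φ u := by norm_num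
  rw [h0, sub_zero] at hceq
  rw [← hceq, abs_mul]
  apply mul_le_mul_of_nonneg_right _ (abs_nonneg v)
  apply abs_deriv_Phi_le hΦ hC1
  calc |u + c * v| ≤ |u| + |c * v| := abs_add_le _ _
    _ ≤ |u| + |v| := by
        rw [abs_mul, abs_of_nonneg (le_of_lt hc.1)]
        nlinarith [abs_nonneg v, hc.2]

end NFAux

open NFAux in
theorem gateaux_derivative_of_modular [Group G] [MulAction G X] [Countable X]
    (S : Finset G) (hgen : Subgroup.closure (S : Set G) = ⊤)
    (Φ φ₀ : ℝ → ℝ) (hΦ : IsNFunction Φ φ₀) (hC1 : ContDiff ℝ 1 Φ)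
    (hΔ₂ : ∃ x₀ > (0:ℝ), ∃ K > (2:ℝ), ∀ x : ℝ, 0 ≤ x → x ≤ x₀ → Φ (2 * x) ≤ K * Φ x)
    (f g : X → ℝ) (hf : MemDPhi (G := G) Φ f) (hg : MemDPhi (G := G) Φ g) :
    Tendsto
      (fun t : ℝ => (dirichletModular' S Φ (f + t • g) - dirichletModular' S Φ f) / t)
      (𝓝[>] (0:ℝ))
      (𝓝 (∑' x : X, ∑ s ∈ S, deriv Φ (f (s⁻¹ • x) - f x) * (g (s⁻¹ • x) - g x))) := by
  classical
  -- abbreviations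
  set U : G → X → ℝ := fun s x => f (s⁻¹ • x) - f x with hUdef
  set V : G → X → ℝ := fun s x => g (s⁻¹ • x) - g x with hVdef
  -- summability of Φ (c * U s ·) and Φ (c * V s ·)
  have hU : ∀ (s : G) (c : ℝ), Summable fun x => Φ (c * U s x) := by
    intro s c
    obtain ⟨a, ha, hsum⟩ := hf s
    exact summable_scale hΦ hΔ₂ ha hsum c
  have hV : ∀ (s : G) (c : ℝ), Summable fun x => Φ (c * V s x) := by
    intro s c
    obtain ⟨a, ha, hsum⟩ := hg s
    exact summable_scale hΦ hΔ₂ ha hsum c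
  -- dominating function
  set H : X → ℝ := fun x => ∑ s ∈ S,
    (Φ (4 * U s x) + Φ (4 * V s x) + Φ (2 * V s x)) with hHdef
  have hH : Summable H :=
    summable_sum (fun s _ => ((hU s 4).add (hV s 4)).add (hV s 2))
  set F : ℝ → X → ℝ := fun t x => ∑ s ∈ S, (Φ (U s x + t * V s x) - Φ (U s x)) / t with hFdef
  set L : X → ℝ := fun x => ∑ s ∈ S, deriv Φ (U s x) * V s x with hLdef
  -- termwise bound
  have hterm : ∀ (s : G) (x : X), ∀ t ∈ Set.Ioc (0:ℝ) 1,
      |(Φ (U s x + t * V s x) - Φ (U s x)) / t|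
        ≤ Φ (4 * U s x) + Φ (4 * V s x) + Φ (2 * V s x) := by
    intro s x t ht
    have h1 := quotient_bound hΦ hC1 (u := U s x) (v := V s x) ht.1 ht.2
    have h2 := young hΦ (w := |U s x| + |V s x|) (v := |V s x|)
      (by positivity) (abs_nonneg _)
    have h3 : Φ (2 * (|U s x| + |V s x|)) ≤ Φ (4 * U s x) + Φ (4 * V s x) := by
      have := Phi_add_le hΦ (2 * |U s x|) (2 * |V s x|)
      have e1 : 2 * (|U s x| + |V s x|) = 2 * |U s x| + 2 * |V s x| := by ring
      have e2 : Φ (2 * (2 * |U s x|)) = Φ (4 * U s x) := by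
        rw [Phi_abs hΦ (2 * (2 * |U s x|)), Phi_abs hΦ (4 * U s x)]
        congr 1
        rw [abs_mul, abs_mul, abs_mul, abs_abs, abs_two,
          abs_of_nonneg (by norm_num : (0:ℝ) ≤ 4)]
        ring
      have e3 : Φ (2 * (2 * |V s x|)) = Φ (4 * V s x) := by
        rw [Phi_abs hΦ (2 * (2 * |V s x|)), Phi_abs hΦ (4 * V s x)]
        congr 1
        rw [abs_mul, abs_mul, abs_mul, abs_abs, abs_two,
          abs_of_nonneg (by norm_num : (0:ℝ) ≤ 4)]
        ring
      rw [e1]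
      rw [e2, e3] at this
      exact this
    have h4 : Φ (2 * |V s x|) = Φ (2 * V s x) := by
      rw [Phi_abs hΦ (2 * |V s x|), Phi_abs hΦ (2 * V s x)]
      congr 1
      rw [abs_mul, abs_mul, abs_abs]
    have h5 : phi φ₀ (|U s x| + |V s x|) * |V s x| ≤ Φ (4 * U s x) + Φ (4 * V s x) + Φ (2 * V s x) := by
      rw [h4] at h2
      linarith
    linarith
  -- bound on F
  have hbound : ∀ t ∈ Set.Ioc (0:ℝ) 1, ∀ x : X, ‖F t x‖ ≤ H x := by
    intro t ht x
    rw [Real.norm_eq_abs]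
    calc |F t x| ≤ ∑ s ∈ S, |(Φ (U s x + t * V s x) - Φ (U s x)) / t| :=
          Finset.abs_sum_le_sum_abs _ _
      _ ≤ H x := Finset.sum_le_sum (fun s _ => hterm s x t ht)
  -- pointwise convergence
  have hlim : ∀ x : X, Tendsto (F · x) (𝓝[>] (0:ℝ)) (𝓝 (L x)) := by
    intro x
    apply tendsto_finset_sum
    intro s _
    -- derivative of t ↦ Φ (U + t V) at 0
    have hd : Differentiable ℝ Φ := hC1.differentiable one_ne_zero
    have h1 : HasDerivAt (fun r : ℝ => U s x + r * V s x) (V s x) 0 := by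
      simpa using ((hasDerivAt_id (0:ℝ)).mul_const (V s x)).const_add (U s x)
    have h2 : HasDerivAt (fun r : ℝ => Φ (U s x + r * V s x))
        (deriv Φ (U s x) * V s x) 0 := by
      have := ((hd (U s x + 0 * V s x)).hasDerivAt.comp 0 h1)
      simp only [zero_mul, add_zero] at this
      exact this
    have h3 := h2.tendsto_slope_zero_right
    apply h3.congr
    intro t
    simp [div_eq_inv_mul]
  -- dominated convergence
  have hdct : Tendsto (fun t => ∑' x, F t x) (𝓝[>] (0:ℝ)) (𝓝 (∑' x, L x)) := by
    apply tendsto_tsum_of_dominated_convergence hH hlim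
    filter_upwards [Ioc_mem_nhdsGT one_pos] with t ht
    exact hbound t ht
  -- eventual equality of the difference quotient with ∑' F
  have heq : ∀ᶠ t in 𝓝[>] (0:ℝ),
      (dirichletModular' S Φ (f + t • g) - dirichletModular' S Φ f) / t = ∑' x, F t x := by
    filter_upwards [Ioc_mem_nhdsGT one_pos] with t ht
    have hA : ∀ s ∈ S, Summable fun x => Φ (U s x + t * V s x) := by
      intro s _
      apply Summable.of_nonneg_of_le (fun x => Phi_nonneg hΦ _)
        (f := fun x => Φ (2 * U s x) + Φ (2 * V s x)) (fun x => ?_) ((hU s 2).add (hV s 2))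
      have hle1 := Phi_add_le hΦ (U s x) (t * V s x)
      have hle2 : Φ (2 * (t * V s x)) ≤ Φ (2 * V s x) := by
        apply Phi_mono_abs hΦ
        rw [abs_mul, abs_mul, abs_mul, abs_two, abs_of_nonneg (le_of_lt ht.1)]
        nlinarith [abs_nonneg (V s x), ht.2]
      show Φ (U s x + t * V s x) ≤ Φ (2 * U s x) + Φ (2 * V s x)
      linarith
    have hAt : Summable fun x => ∑ s ∈ S, Φ (U s x + t * V s x) := summable_sum hA
    have hB : Summable fun x => ∑ s ∈ S, Φ (U s x) := by
      apply summable_sum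
      intro s _
      have := hU s 1
      simpa using this
    have dm1 : dirichletModular' S Φ (f + t • g)
        = ∑' x, ∑ s ∈ S, Φ (U s x + t * V s x) := by
      unfold dirichletModular'
      apply tsum_congr
      intro x
      apply Finset.sum_congr rfl
      intro s _
      congr 1
      simp only [Pi.add_apply, Pi.smul_apply, smul_eq_mul, hUdef, hVdef]
      ring
    have dm2 : dirichletModular' S Φ f = ∑' x, ∑ s ∈ S, Φ (U s x) := rfl
    rw [dm1, dm2, ← hAt.tsum_sub hB, ← tsum_div_const]
    apply tsum_congr
    intro x
    rw [← Finset.sum_sub_distrib, Finset.sum_div]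
  exact hdct.congr' (heq.mono fun t h => h.symm)
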